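/- GPIM objective lower bound: under the Markov structure ω → s → g → s̃ on finite sets, I(s;ω) + I(s̃;g) ≥ I(s;ω) + I(s̃;ω) ≥ 2H(ω) + E[log q(ω|s) + log q(ω|s̃)] for any positive conditional q(ω|·). -/

import Mathlib

open scoped BigOperators

/-- Mutual information of a finite joint distribution given as `p a b`. -/
noncomputable def mi {A B : Type*} [Fintype A] [Fintype B] (p : A → B → ℝ) : ℝ :=
  ∑ a, ∑ b, p a b * Real.log (p a b / ((∑ b', p a b') * (∑ a', p a' b)))

/-- Shannon entropy of a finite distribution. -/
noncomputable def ent {A : Type*} [Fintype A] (p : A → ℝ) : ℝ :=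
  -∑ a, p a * Real.log (p a)

lemma gibbs {ι : Type*} [Fintype ι] (p q : ι → ℝ)
    (hp : ∀ i, 0 ≤ p i) (hq : ∀ i, 0 ≤ q i) (hpq : ∀ i, 0 < p i → 0 < q i)
    (hsum : ∑ i, q i ≤ ∑ i, p i) :
    0 ≤ ∑ i, p i * Real.log (p i / q i) := by
  have key : ∀ i, p i * Real.log (q i / p i) ≤ q i - p i := by
    intro i
    rcases eq_or_lt_of_le (hp i) with h | h
    · simp [← h, hq i]
    · have hqi := hpq i h
      have hlog := Real.log_le_sub_one_of_pos (div_pos hqi h)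
      calc p i * Real.log (q i / p i) ≤ p i * (q i / p i - 1) :=
            mul_le_mul_of_nonneg_left hlog (le_of_lt h)
        _ = q i - p i := by field_simp
  have h2 : ∑ i, p i * Real.log (q i / p i) ≤ 0 := by
    calc ∑ i, p i * Real.log (q i / p i) ≤ ∑ i, (q i - p i) :=
          Finset.sum_le_sum (fun i _ => key i)
      _ = ∑ i, q i - ∑ i, p i := Finset.sum_sub_distrib _ _
      _ ≤ 0 := by linarith
  have h3 : ∀ i, p i * Real.log (p i / q i) = -(p i * Real.log (q i / p i)) := by
    intro i
    rw [← mul_neg, ← Real.log_inv, inv_div]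
  simp only [h3, Finset.sum_neg_distrib]
  linarith

lemma varbound {Ω X : Type*} [Fintype Ω] [Fintype X]
    (π : Ω → ℝ) (k : Ω → X → ℝ) (q : X → Ω → ℝ)
    (hπ0 : ∀ ω, 0 ≤ π ω)
    (hk0 : ∀ ω x, 0 ≤ k ω x) (hk1 : ∀ ω, ∑ x, k ω x = 1)
    (hq0 : ∀ x ω, 0 < q x ω) (hq1 : ∀ x, ∑ ω, q x ω = 1) :
    ent π + ∑ ω, ∑ x, π ω * k ω x * Real.log (q x ω) ≤ mi (fun ω x => π ω * k ω x) := by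
  set mX : X → ℝ := fun x => ∑ ω, π ω * k ω x with hmX
  -- basic facts
  have hmX0 : ∀ x, 0 ≤ mX x := fun x =>
    Finset.sum_nonneg fun ω _ => mul_nonneg (hπ0 ω) (hk0 ω x)
  have hmarg : ∀ ω, ∑ x, π ω * k ω x = π ω := by
    intro ω; rw [← Finset.mul_sum, hk1, mul_one]
  -- rewrite mi
  have hmi : mi (fun ω x => π ω * k ω x)
      = ∑ ω, ∑ x, π ω * k ω x * Real.log (π ω * k ω x / (π ω * mX x)) := by
    unfold mi
    refine Finset.sum_congr rfl fun ω _ => Finset.sum_congr rfl fun x _ => ?_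
    rw [hmarg]
  -- rewrite ent
  have hent : ent π = -∑ ω, ∑ x, π ω * k ω x * Real.log (π ω) := by
    unfold ent
    congr 1
    refine Finset.sum_congr rfl fun ω _ => ?_
    rw [← Finset.sum_mul, hmarg]
  rw [hmi, hent]
  -- reduce to gibbs
  have key : 0 ≤ ∑ ω, ∑ x, π ω * k ω x * Real.log (π ω * k ω x / (mX x * q x ω)) := by
    have := gibbs (ι := Ω × X) (fun i => π i.1 * k i.1 i.2)
      (fun i => mX i.2 * q i.2 i.1)
      (fun i => mul_nonneg (hπ0 _) (hk0 _ _))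
      (fun i => mul_nonneg (hmX0 _) (le_of_lt (hq0 _ _)))
      (fun i hi => by
        have hm : 0 < mX i.2 := lt_of_lt_of_le hi
          (Finset.single_le_sum (f := fun ω => π ω * k ω i.2)
            (fun ω _ => mul_nonneg (hπ0 ω) (hk0 ω i.2)) (Finset.mem_univ i.1))
        exact mul_pos hm (hq0 _ _))
      (by
        rw [Fintype.sum_prod_type, Fintype.sum_prod_type]
        refine le_of_eq ?_
        rw [Finset.sum_comm]
        calc ∑ x, ∑ ω, mX x * q x ω = ∑ x, mX x := by
              refine Finset.sum_congr rfl fun x _ => ?_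
              rw [← Finset.mul_sum, hq1, mul_one]
          _ = ∑ x, ∑ ω, π ω * k ω x := rfl
          _ = ∑ ω, ∑ x, π ω * k ω x := by rw [Finset.sum_comm])
    simpa only [Fintype.sum_prod_type] using this
  have expand : ∀ ω x, π ω * k ω x * Real.log (π ω * k ω x / (mX x * q x ω))
      = π ω * k ω x * Real.log (π ω * k ω x / (π ω * mX x))
        + π ω * k ω x * Real.log (π ω)
        - π ω * k ω x * Real.log (q x ω) := by
    intro ω x
    rcases eq_or_lt_of_le (mul_nonneg (hπ0 ω) (hk0 ω x)) with h | h
    · rw [← h]; ring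
    · rcases mul_pos_iff.mp h with ⟨hπ, hk⟩ | ⟨hπ, _⟩
      swap
      · exact absurd hπ (not_lt.mpr (hπ0 ω))
      have hm : 0 < mX x := lt_of_lt_of_le h
        (Finset.single_le_sum (f := fun ω' => π ω' * k ω' x)
          (fun ω' _ => mul_nonneg (hπ0 ω') (hk0 ω' x)) (Finset.mem_univ ω))
      have hq := hq0 x ω
      rw [Real.log_div (ne_of_gt h) (by positivity),
          Real.log_div (ne_of_gt h) (by positivity),
          Real.log_mul (ne_of_gt hm) (ne_of_gt hq),
          Real.log_mul (ne_of_gt hπ) (ne_of_gt hm)]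
      ring
  have hsum1 : ∑ ω, ∑ x, π ω * k ω x * Real.log (π ω * k ω x / (mX x * q x ω))
      = (∑ ω, ∑ x, π ω * k ω x * Real.log (π ω * k ω x / (π ω * mX x)))
        + (∑ ω, ∑ x, π ω * k ω x * Real.log (π ω))
        - (∑ ω, ∑ x, π ω * k ω x * Real.log (q x ω)) := by
    simp only [expand, Finset.sum_add_distrib, Finset.sum_sub_distrib]
  rw [hsum1] at key
  linarith

lemma dpi {A B C : Type*} [Fintype A] [Fintype B] [Fintype C]
    (r : A → B → ℝ) (k : B → C → ℝ)
    (hr : ∀ a b, 0 ≤ r a b) (hk0 : ∀ b c, 0 ≤ k b c) (hk1 : ∀ b, ∑ c, k b c = 1) :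
    mi (fun a c => ∑ b, r a b * k b c) ≤ mi (fun b c => (∑ a, r a b) * k b c) := by
  set rA : A → ℝ := fun a => ∑ b, r a b with hrA
  set rB : B → ℝ := fun b => ∑ a, r a b with hrB
  set s : A → C → ℝ := fun a c => ∑ b, r a b * k b c with hs
  set mC : C → ℝ := fun c => ∑ b, rB b * k b c with hmC
  have hrA0 : ∀ a, 0 ≤ rA a := fun a => Finset.sum_nonneg fun b _ => hr a b
  have hrB0 : ∀ b, 0 ≤ rB b := fun b => Finset.sum_nonneg fun a _ => hr a b
  have hs0 : ∀ a c, 0 ≤ s a c :=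
    fun a c => Finset.sum_nonneg fun b _ => mul_nonneg (hr a b) (hk0 b c)
  have hmC0 : ∀ c, 0 ≤ mC c :=
    fun c => Finset.sum_nonneg fun b _ => mul_nonneg (hrB0 b) (hk0 b c)
  -- marginals
  have hsC : ∀ a, ∑ c, s a c = rA a := by
    intro a
    rw [hs, hrA]
    rw [Finset.sum_comm]
    refine Finset.sum_congr rfl fun b _ => ?_
    rw [← Finset.mul_sum, hk1, mul_one]
  have hsA : ∀ c, ∑ a, s a c = mC c := by
    intro c
    rw [hs, hmC, Finset.sum_comm]
    refine Finset.sum_congr rfl fun b _ => ?_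
    rw [← Finset.sum_mul, hrB]
  -- rewrite the two mi's
  have hmi1 : mi (fun b c => rB b * k b c)
      = ∑ b, ∑ c, rB b * k b c * Real.log (rB b * k b c / (rB b * mC c)) := by
    unfold mi
    refine Finset.sum_congr rfl fun b _ => Finset.sum_congr rfl fun c _ => ?_
    rw [← Finset.mul_sum, hk1, mul_one]
  have hmi2 : mi (fun a c => s a c)
      = ∑ a, ∑ c, s a c * Real.log (s a c / (rA a * mC c)) := by
    unfold mi
    refine Finset.sum_congr rfl fun a _ => Finset.sum_congr rfl fun c _ => ?_
    rw [hsC, hsA]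
  -- expand each mi over triples
  have hmi1' : mi (fun b c => rB b * k b c)
      = ∑ a, ∑ b, ∑ c, r a b * k b c * Real.log (rB b * k b c / (rB b * mC c)) := by
    rw [hmi1]
    have e1 : ∀ b c, rB b * k b c * Real.log (rB b * k b c / (rB b * mC c))
        = ∑ a, r a b * k b c * Real.log (rB b * k b c / (rB b * mC c)) := by
      intro b c
      rw [← Finset.sum_mul, ← Finset.sum_mul]
    calc ∑ b, ∑ c, rB b * k b c * Real.log (rB b * k b c / (rB b * mC c))
        = ∑ b, ∑ c, ∑ a, r a b * k b c * Real.log (rB b * k b c / (rB b * mC c)) := by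
          simp only [e1]
      _ = ∑ b, ∑ a, ∑ c, r a b * k b c * Real.log (rB b * k b c / (rB b * mC c)) := by
          refine Finset.sum_congr rfl fun b _ => ?_
          rw [Finset.sum_comm]
      _ = ∑ a, ∑ b, ∑ c, r a b * k b c * Real.log (rB b * k b c / (rB b * mC c)) := by
          rw [Finset.sum_comm]
  have hmi2' : mi (fun a c => s a c)
      = ∑ a, ∑ b, ∑ c, r a b * k b c * Real.log (s a c / (rA a * mC c)) := by
    rw [hmi2]
    refine Finset.sum_congr rfl fun a _ => ?_
    rw [Finset.sum_comm]
    refine Finset.sum_congr rfl fun c _ => ?_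
    rw [← Finset.sum_mul, hs]
  have hgibbs : 0 ≤ ∑ a, ∑ b, ∑ c,
      r a b * k b c * Real.log (r a b * k b c / (r a b * s a c / rA a)) := by
    have := gibbs (ι := A × B × C) (fun i => r i.1 i.2.1 * k i.2.1 i.2.2)
      (fun i => r i.1 i.2.1 * s i.1 i.2.2 / rA i.1)
      (fun i => mul_nonneg (hr _ _) (hk0 _ _))
      (fun i => div_nonneg (mul_nonneg (hr _ _) (hs0 _ _)) (hrA0 _))
      (fun i hi => by
        rcases mul_pos_iff.mp hi with ⟨hri, hki⟩ | ⟨hri, _⟩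
        swap
        · exact absurd hri (not_lt.mpr (hr _ _))
        have hsi : 0 < s i.1 i.2.2 := lt_of_lt_of_le hi
          (Finset.single_le_sum (f := fun b => r i.1 b * k b i.2.2)
            (fun b _ => mul_nonneg (hr _ _) (hk0 _ _)) (Finset.mem_univ i.2.1))
        have hrAi : 0 < rA i.1 := lt_of_lt_of_le hri
          (Finset.single_le_sum (f := fun b => r i.1 b)
            (fun b _ => hr _ _) (Finset.mem_univ i.2.1))
        positivity)
      (by
        simp only [Fintype.sum_prod_type]
        refine le_of_eq ?_
        refine Finset.sum_congr rfl fun a _ => ?_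
        rcases eq_or_lt_of_le (hrA0 a) with h0 | h0
        · have hz : ∀ b, r a b = 0 := by
            intro b
            have h2 : r a b ≤ rA a := Finset.single_le_sum
              (f := fun b => r a b) (fun b _ => hr a b) (Finset.mem_univ b)
            have h1 := hr a b
            linarith
          simp [hz]
        · have : ∑ b, ∑ c, r a b * s a c / rA a
              = (∑ b, r a b) * (∑ c, s a c) / rA a := by
            rw [Finset.sum_mul_sum]
            rw [Finset.sum_div]
            refine Finset.sum_congr rfl fun b _ => ?_
            rw [Finset.sum_div]
          rw [this, hsC]
          rw [show (∑ b, r a b) = rA a from rfl]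
          rw [mul_div_assoc, div_self (ne_of_gt h0), mul_one]
          symm
          calc ∑ b, ∑ c, r a b * k b c = ∑ b, r a b := by
                refine Finset.sum_congr rfl fun b _ => ?_
                rw [← Finset.mul_sum, hk1, mul_one]
            _ = rA a := rfl)
    simpa only [Fintype.sum_prod_type] using this
  -- pointwise identity
  have expand : ∀ a b c, r a b * k b c * Real.log (r a b * k b c / (r a b * s a c / rA a))
      = r a b * k b c * Real.log (rB b * k b c / (rB b * mC c))
        - r a b * k b c * Real.log (s a c / (rA a * mC c)) := by
    intro a b c
    rcases eq_or_lt_of_le (mul_nonneg (hr a b) (hk0 b c)) with h | h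
    · rw [← h]; ring
    · rcases mul_pos_iff.mp h with ⟨hri, hki⟩ | ⟨hri, _⟩
      swap
      · exact absurd hri (not_lt.mpr (hr a b))
      have hsi : 0 < s a c := lt_of_lt_of_le h
        (Finset.single_le_sum (f := fun b' => r a b' * k b' c)
          (fun b' _ => mul_nonneg (hr _ _) (hk0 _ _)) (Finset.mem_univ b))
      have hrAi : 0 < rA a := lt_of_lt_of_le hri
        (Finset.single_le_sum (f := fun b' => r a b') (fun b' _ => hr _ _)
          (Finset.mem_univ b))
      have hrBi : 0 < rB b := lt_of_lt_of_le hri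
        (Finset.single_le_sum (f := fun a' => r a' b) (fun a' _ => hr _ _)
          (Finset.mem_univ a))
      have hmCi : 0 < mC c := lt_of_lt_of_le (mul_pos hrBi hki)
        (Finset.single_le_sum (f := fun b' => rB b' * k b' c)
          (fun b' _ => mul_nonneg (hrB0 _) (hk0 _ _)) (Finset.mem_univ b))
      rw [Real.log_div (ne_of_gt h) (by positivity),
          Real.log_div (ne_of_gt (mul_pos hrBi hki)) (by positivity),
          Real.log_div (ne_of_gt hsi) (by positivity),
          Real.log_div (ne_of_gt (mul_pos hri hsi)) (ne_of_gt hrAi),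
          Real.log_mul (ne_of_gt hri) (ne_of_gt hki),
          Real.log_mul (ne_of_gt hrBi) (ne_of_gt hki),
          Real.log_mul (ne_of_gt hrBi) (ne_of_gt hmCi),
          Real.log_mul (ne_of_gt hrAi) (ne_of_gt hmCi),
          Real.log_mul (ne_of_gt hri) (ne_of_gt hsi)]
      ring
  rw [hmi1', hmi2']
  have hsum1 : ∑ a, ∑ b, ∑ c,
      r a b * k b c * Real.log (r a b * k b c / (r a b * s a c / rA a))
      = (∑ a, ∑ b, ∑ c, r a b * k b c * Real.log (rB b * k b c / (rB b * mC c)))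
        - (∑ a, ∑ b, ∑ c, r a b * k b c * Real.log (s a c / (rA a * mC c))) := by
    simp only [expand, Finset.sum_sub_distrib]
  rw [hsum1] at hgibbs
  linarith


/-- Full GPIM chain of inequalities (Equations 3–4 and the surrogate `J`):
under the Markov structure ω → s → g → s̃ given by the joint
`p(ω)kS(s|ω)kG(g|s)kS'(s̃|g)`, for any positive conditional `q(ω|·)`,
`I(s;ω) + I(s̃;g) ≥ I(s;ω) + I(s̃;ω) ≥ 2H(ω) + E[log q(ω|s) + log q(ω|s̃)]`. -/
theorem stmt14 {Ω S G : Type*} [Fintype Ω] [Fintype S] [Fintype G]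
    (pΩ : Ω → ℝ) (kS : Ω → S → ℝ) (kG : S → G → ℝ) (kS' : G → S → ℝ)
    (q : S → Ω → ℝ)
    (hΩ0 : ∀ ω, 0 ≤ pΩ ω) (hΩ1 : ∑ ω, pΩ ω = 1)
    (hS0 : ∀ ω s, 0 ≤ kS ω s) (hS1 : ∀ ω, ∑ s, kS ω s = 1)
    (hG0 : ∀ s g, 0 ≤ kG s g) (hG1 : ∀ s, ∑ g, kG s g = 1)
    (hS'0 : ∀ g s', 0 ≤ kS' g s') (hS'1 : ∀ g, ∑ s', kS' g s' = 1)
    (hq0 : ∀ s ω, 0 < q s ω) (hq1 : ∀ s, ∑ ω, q s ω = 1) :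
    mi (fun ω s => pΩ ω * kS ω s) +
        mi (fun g s' => (∑ ω, ∑ s, pΩ ω * kS ω s * kG s g) * kS' g s') ≥
      mi (fun ω s => pΩ ω * kS ω s) +
        mi (fun ω s' => pΩ ω * ∑ s, ∑ g, kS ω s * kG s g * kS' g s') ∧
    mi (fun ω s => pΩ ω * kS ω s) +
        mi (fun ω s' => pΩ ω * ∑ s, ∑ g, kS ω s * kG s g * kS' g s') ≥
      2 * ent pΩ +
        ∑ ω, ∑ s, ∑ g, ∑ s', pΩ ω * kS ω s * kG s g * kS' g s' *
          (Real.log (q s ω) + Real.log (q s' ω)) := by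
  constructor
  · -- Part 1: data processing inequality
    have hdpi := dpi (fun ω g => ∑ s, pΩ ω * kS ω s * kG s g) kS'
      (fun ω g => Finset.sum_nonneg fun s _ =>
        mul_nonneg (mul_nonneg (hΩ0 ω) (hS0 ω s)) (hG0 s g))
      hS'0 hS'1
    have heq : (fun (ω : Ω) (s' : S) =>
        ∑ g, (∑ s, pΩ ω * kS ω s * kG s g) * kS' g s')
        = fun ω s' => pΩ ω * ∑ s, ∑ g, kS ω s * kG s g * kS' g s' := by
      funext ω s'
      simp only [Finset.sum_mul, Finset.mul_sum]
      rw [Finset.sum_comm]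
      exact Finset.sum_congr rfl fun s _ => Finset.sum_congr rfl fun g _ => by ring
    rw [heq] at hdpi
    exact add_le_add_right hdpi _
  · -- Part 2: variational bound, twice
    have hv1 := varbound pΩ kS q hΩ0 hS0 hS1 hq0 hq1
    have hker1 : ∀ ω, ∑ s', ∑ s, ∑ g, kS ω s * kG s g * kS' g s' = 1 := by
      intro ω
      rw [Finset.sum_comm]
      have h1 : ∀ s, ∑ s', ∑ g, kS ω s * kG s g * kS' g s' = kS ω s := by
        intro s
        rw [Finset.sum_comm]
        have h2 : ∀ g, ∑ s', kS ω s * kG s g * kS' g s' = kS ω s * kG s g := by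
          intro g; rw [← Finset.mul_sum, hS'1, mul_one]
        rw [Finset.sum_congr rfl fun g _ => h2 g, ← Finset.mul_sum, hG1, mul_one]
      rw [Finset.sum_congr rfl fun s _ => h1 s, hS1]
    have hv2 := varbound pΩ (fun ω s' => ∑ s, ∑ g, kS ω s * kG s g * kS' g s') q hΩ0
      (fun ω s' => Finset.sum_nonneg fun s _ => Finset.sum_nonneg fun g _ =>
        mul_nonneg (mul_nonneg (hS0 ω s) (hG0 s g)) (hS'0 g s'))
      hker1 hq0 hq1
    -- split the big sum
    have hb1 : ∑ ω, ∑ s, ∑ g, ∑ s', pΩ ω * kS ω s * kG s g * kS' g s' * Real.log (q s ω)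
        = ∑ ω, ∑ s, pΩ ω * kS ω s * Real.log (q s ω) := by
      refine Finset.sum_congr rfl fun ω _ => Finset.sum_congr rfl fun s _ => ?_
      have h2 : ∀ g, ∑ s', pΩ ω * kS ω s * kG s g * kS' g s' * Real.log (q s ω)
          = pΩ ω * kS ω s * Real.log (q s ω) * kG s g := by
        intro g
        calc ∑ s', pΩ ω * kS ω s * kG s g * kS' g s' * Real.log (q s ω)
            = ∑ s', pΩ ω * kS ω s * Real.log (q s ω) * kG s g * kS' g s' :=
              Finset.sum_congr rfl fun s' _ => by ring
          _ = pΩ ω * kS ω s * Real.log (q s ω) * kG s g * ∑ s', kS' g s' := by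
              rw [Finset.mul_sum]
          _ = pΩ ω * kS ω s * Real.log (q s ω) * kG s g := by rw [hS'1, mul_one]
      rw [Finset.sum_congr rfl fun g _ => h2 g, ← Finset.mul_sum, hG1, mul_one]
    have hb2 : ∑ ω, ∑ s, ∑ g, ∑ s', pΩ ω * kS ω s * kG s g * kS' g s' * Real.log (q s' ω)
        = ∑ ω, ∑ s', pΩ ω * (∑ s, ∑ g, kS ω s * kG s g * kS' g s') * Real.log (q s' ω) := by
      refine Finset.sum_congr rfl fun ω _ => ?_
      calc ∑ s, ∑ g, ∑ s', pΩ ω * kS ω s * kG s g * kS' g s' * Real.log (q s' ω)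
          = ∑ s, ∑ s', ∑ g, pΩ ω * kS ω s * kG s g * kS' g s' * Real.log (q s' ω) := by
            refine Finset.sum_congr rfl fun s _ => ?_
            rw [Finset.sum_comm]
        _ = ∑ s', ∑ s, ∑ g, pΩ ω * kS ω s * kG s g * kS' g s' * Real.log (q s' ω) := by
            rw [Finset.sum_comm]
        _ = ∑ s', pΩ ω * (∑ s, ∑ g, kS ω s * kG s g * kS' g s') * Real.log (q s' ω) := by
            refine Finset.sum_congr rfl fun s' _ => ?_
            calc ∑ s, ∑ g, pΩ ω * kS ω s * kG s g * kS' g s' * Real.log (q s' ω)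
                = ∑ s, ∑ g, pΩ ω * Real.log (q s' ω) * (kS ω s * kG s g * kS' g s') :=
                  Finset.sum_congr rfl fun s _ => Finset.sum_congr rfl fun g _ => by ring
              _ = pΩ ω * Real.log (q s' ω) * ∑ s, ∑ g, kS ω s * kG s g * kS' g s' := by
                  simp only [← Finset.mul_sum]
              _ = pΩ ω * (∑ s, ∑ g, kS ω s * kG s g * kS' g s') * Real.log (q s' ω) := by
                  ring
    have hsplit : ∑ ω, ∑ s, ∑ g, ∑ s', pΩ ω * kS ω s * kG s g * kS' g s' *
          (Real.log (q s ω) + Real.log (q s' ω))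
        = (∑ ω, ∑ s, ∑ g, ∑ s', pΩ ω * kS ω s * kG s g * kS' g s' * Real.log (q s ω))
          + ∑ ω, ∑ s, ∑ g, ∑ s', pΩ ω * kS ω s * kG s g * kS' g s' * Real.log (q s' ω) := by
      simp only [mul_add, Finset.sum_add_distrib]
    rw [ge_iff_le, hsplit, hb1, hb2]
    unfold ent at *
    linarith
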